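/- A finite set X of linear λ-terms is erasable if and only if every term in X is closed. -/
import Mathlib


/-!
Core development: untyped λ-terms in de Bruijn representation, linearity,
β- and η-reduction, as in the paper "A type-assignment of linear erasure
and duplication" (Curzi, Roversi).
-/

namespace LEMPaper

/-- Untyped λ-terms, de Bruijn representation. -/
inductive Lam : Type
  | var : ℕ → Lam
  | app : Lam → Lam → Lam
  | lam : Lam → Lam
  deriving DecidableEq

namespace Lam

/-- Lift a renaming under a binder. -/
def liftRen (ρ : ℕ → ℕ) : ℕ → ℕ
  | 0 => 0
  | n + 1 => ρ n + 1

/-- Apply a renaming of free variables. -/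
def rename (ρ : ℕ → ℕ) : Lam → Lam
  | var n => var (ρ n)
  | app M N => app (M.rename ρ) (N.rename ρ)
  | lam M => lam (M.rename (liftRen ρ))

/-- Shift all free variables up by one. -/
def shift (M : Lam) : Lam := M.rename Nat.succ

/-- Lift a simultaneous substitution under a binder. -/
def liftSub (s : ℕ → Lam) : ℕ → Lam
  | 0 => var 0
  | n + 1 => (s n).shift

/-- Simultaneous (capture-avoiding) substitution. -/
def substAll (s : ℕ → Lam) : Lam → Lam
  | var n => s n
  | app M N => app (M.substAll s) (N.substAll s)
  | lam M => lam (M.substAll (liftSub s))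

/-- Capture-avoiding substitution `M[N/n]`; the variables above `n` are decremented. -/
def subst (M : Lam) (n : ℕ) (N : Lam) : Lam :=
  M.substAll (fun m => if m < n then var m else if m = n then N else var (m - 1))

/-- Number of (free) occurrences of the variable `n` in a term. -/
def countFree : Lam → ℕ → ℕ
  | var m, n => if m = n then 1 else 0
  | app M N, n => M.countFree n + N.countFree n
  | lam M, n => M.countFree (n + 1)

/-- A term is closed when it has no free variables. -/
def Closed (M : Lam) : Prop := ∀ n, M.countFree n = 0

/-- A λ-term is linear if all of its free variables occur exactly once in it and
every abstraction binds a variable occurring exactly once in its (linear) body. -/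
def Linear : Lam → Prop
  | var _ => True
  | app M N => M.Linear ∧ N.Linear ∧ ∀ n, M.countFree n = 0 ∨ N.countFree n = 0
  | lam M => M.Linear ∧ M.countFree 0 = 1

/-- The identity combinator `I = λx.x`. -/
def I : Lam := lam (var 0)

/-- The linear pairing `⟨M,N⟩ = λz. z M N`. -/
def pair (M N : Lam) : Lam := lam (app (app (var 0) M.shift) N.shift)

/-- The size (number of nodes of the syntax tree) of a term. -/
def size : Lam → ℕ
  | var _ => 1
  | app M N => M.size + N.size + 1
  | lam M => M.size + 1

/-- One-step β-reduction, closed under arbitrary contexts. -/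
inductive Beta : Lam → Lam → Prop
  | beta (M N : Lam) : Beta (app (lam M) N) (M.subst 0 N)
  | appL {M M'} (N : Lam) : Beta M M' → Beta (app M N) (app M' N)
  | appR (M : Lam) {N N'} : Beta N N' → Beta (app M N) (app M N')
  | lam {M M'} : Beta M M' → Beta (lam M) (lam M')

/-- One-step η-reduction `λx.Mx →η M` (x not free in M), closed under contexts. -/
inductive Eta : Lam → Lam → Prop
  | eta (M : Lam) : Eta (lam (app M.shift (var 0))) M
  | appL {M M'} (N : Lam) : Eta M M' → Eta (app M N) (app M' N)
  | appR (M : Lam) {N N'} : Eta N N' → Eta (app M N) (app M N')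
  | lam {M M'} : Eta M M' → Eta (lam M) (lam M')

/-- One-step βη-reduction. -/
def BetaEta (M N : Lam) : Prop := Beta M N ∨ Eta M N

/-- A value is a closed linear λ-term in β-normal form. -/
def IsValue (V : Lam) : Prop := V.Linear ∧ V.Closed ∧ ∀ W, ¬ Beta V W

end Lam

end LEMPaper

namespace LEMPaper

/-- A set `X` of linear λ-terms is *erasable* if there is a linear λ-term `E`
(an eraser of `X`) such that `E M →βη* I` for every `M ∈ X`. -/
def Erasable (X : Set Lam) : Prop :=
  ∃ E : Lam, E.Linear ∧ ∀ M ∈ X, Relation.ReflTransGen Lam.BetaEta (Lam.app E M) Lam.I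

namespace Lam

/-! ### Auxiliary development -/

/-- Weak linearity: every abstraction binds exactly one occurrence. -/
def WLinear : Lam → Prop
  | var _ => True
  | app A B => WLinear A ∧ WLinear B
  | lam A => WLinear A ∧ A.countFree 0 = 1

theorem linear_wlinear : ∀ M : Lam, Linear M → WLinear M
  | var _, _ => trivial
  | app A B, h => ⟨linear_wlinear A h.1, linear_wlinear B h.2.1⟩
  | lam A, h => ⟨linear_wlinear A h.1, h.2⟩

theorem cf_rename : ∀ (M : Lam) (ρ : ℕ → ℕ) (n m : ℕ),
    (∀ x, ρ x = n ↔ x = m) → (M.rename ρ).countFree n = M.countFree m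
  | var x, ρ, n, m, h => by
      simp only [rename, countFree]
      by_cases hx : x = m
      · simp [hx, (h m).2 rfl]
      · have hn : ρ x ≠ n := fun hc => hx ((h x).1 hc)
        simp [hx, hn]
  | app A B, ρ, n, m, h => by
      simp only [rename, countFree, cf_rename A ρ n m h, cf_rename B ρ n m h]
  | lam A, ρ, n, m, h => by
      simp only [rename, countFree]
      refine cf_rename A (liftRen ρ) (n+1) (m+1) ?_
      intro x
      cases x with
      | zero => simp [liftRen]
      | succ y => simpa [liftRen] using h y

theorem cf_rename_zero : ∀ (M : Lam) (ρ : ℕ → ℕ) (n : ℕ),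
    (∀ x, ρ x ≠ n) → (M.rename ρ).countFree n = 0
  | var x, ρ, n, h => by simp [rename, countFree, h x]
  | app A B, ρ, n, h => by
      simp [rename, countFree, cf_rename_zero A ρ n h, cf_rename_zero B ρ n h]
  | lam A, ρ, n, h => by
      simp only [rename, countFree]
      refine cf_rename_zero A (liftRen ρ) (n+1) ?_
      intro x
      cases x with
      | zero => simp [liftRen]
      | succ y => simpa [liftRen] using h y

theorem cf_shift_succ (M : Lam) (n : ℕ) :
    M.shift.countFree (n+1) = M.countFree n := by
  refine cf_rename M Nat.succ (n+1) n ?_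
  intro x; constructor <;> omega

theorem cf_shift_zero (M : Lam) : M.shift.countFree 0 = 0 := by
  refine cf_rename_zero M Nat.succ 0 ?_
  intro x; omega

theorem liftRen_inj {ρ : ℕ → ℕ} (h : Function.Injective ρ) :
    Function.Injective (liftRen ρ) := by
  intro a b hab
  cases a with
  | zero => cases b with
    | zero => rfl
    | succ b => simp [liftRen] at hab
  | succ a => cases b with
    | zero => simp [liftRen] at hab
    | succ b => simp only [liftRen, Nat.add_right_cancel_iff] at hab; exact congrArg Nat.succ (h hab)

theorem cf_rename_zero' (M : Lam) (ρ : ℕ → ℕ) (h : Function.Injective ρ) (m : ℕ) :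
    (M.rename ρ).countFree (ρ m) = M.countFree m :=
  cf_rename M ρ (ρ m) m (fun x => ⟨fun hx => h hx, fun hx => by rw [hx]⟩)

theorem wlinear_rename : ∀ (M : Lam) (ρ : ℕ → ℕ), Function.Injective ρ →
    (WLinear (M.rename ρ) ↔ WLinear M)
  | var _, _, _ => Iff.rfl
  | app A B, ρ, h => by
      simp only [rename, WLinear, wlinear_rename A ρ h, wlinear_rename B ρ h]
  | lam A, ρ, h => by
      simp only [rename, WLinear, wlinear_rename A (liftRen ρ) (liftRen_inj h)]
      have : (A.rename (liftRen ρ)).countFree 0 = A.countFree 0 := by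
        have := cf_rename_zero' A (liftRen ρ) (liftRen_inj h) 0
        simpa [liftRen] using this
      rw [this]

theorem wlinear_shift (M : Lam) : WLinear M.shift ↔ WLinear M :=
  wlinear_rename M Nat.succ Nat.succ_injective

theorem substAll_congr : ∀ (M : Lam) (s t : ℕ → Lam), (∀ n, s n = t n) →
    M.substAll s = M.substAll t
  | var n, s, t, h => h n
  | app A B, s, t, h => by
      simp only [substAll, substAll_congr A s t h, substAll_congr B s t h]
  | lam A, s, t, h => by
      simp only [substAll]
      refine congrArg lam (substAll_congr A _ _ ?_)
      intro n
      cases n with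
      | zero => rfl
      | succ m => simp [liftSub, h m]

theorem subst_lam (M N : Lam) (k : ℕ) :
    (lam M).subst k N = lam (M.subst (k+1) N.shift) := by
  simp only [subst, substAll]
  refine congrArg lam (substAll_congr M _ _ ?_)
  intro n
  cases n with
  | zero => simp [liftSub]
  | succ m =>
      simp only [liftSub]
      by_cases h1 : m < k
      · simp [h1, Nat.succ_lt_succ h1, shift, rename]
      · by_cases h2 : m = k
        · simp [h1, h2]
        · have : ¬ m + 1 < k + 1 := by omega
          have h3 : ¬ m + 1 = k + 1 := by omega
          simp only [h1, h2, this, h3, if_false, ite_false, shift, rename]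
          congr 1
          omega

theorem cf_subst : ∀ (M : Lam) (k : ℕ) (N : Lam) (n : ℕ),
    (M.subst k N).countFree n =
      (if n < k then M.countFree n else M.countFree (n+1)) +
        M.countFree k * N.countFree n
  | var m, k, N, n => by
      simp only [subst, substAll]
      rcases lt_trichotomy m k with h | h | h
      · have hmk : m ≠ k := by omega
        rw [if_pos h]
        by_cases h2 : n < k
        · simp [countFree, hmk, h2]
        · simp [countFree, hmk, h2, show m ≠ n by omega, show m ≠ n + 1 by omega]
      · subst h
        rw [if_neg (lt_irrefl m), if_pos rfl]
        by_cases h2 : n < m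
        · simp [countFree, h2, show m ≠ n by omega]
        · simp [countFree, h2, show m ≠ n + 1 by omega]
      · have hmk : m ≠ k := by omega
        rw [if_neg (by omega), if_neg hmk]
        by_cases h2 : n < k
        · simp [countFree, hmk, h2, show m - 1 ≠ n by omega, show m ≠ n by omega]
        · by_cases h5 : m = n + 1
          · simp [countFree, hmk, h2, h5, show m - 1 = n by omega,
              show ¬ (n + 1 = k) by omega]
          · simp [countFree, hmk, h2, h5, show m - 1 ≠ n by omega]
  | app A B, k, N, n => by
      simp only [subst, substAll, countFree] at *
      have hA := cf_subst A k N n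
      have hB := cf_subst B k N n
      simp only [subst] at hA hB
      rw [hA, hB]; ring_nf
      by_cases h : n < k <;> simp [h] <;> ring
  | lam A, k, N, n => by
      rw [subst_lam]
      simp only [countFree, cf_subst A (k+1) N.shift (n+1), cf_shift_succ,
        Nat.add_lt_add_iff_right]

theorem wlinear_subst : ∀ (M : Lam) (k : ℕ) (N : Lam),
    WLinear M → WLinear N → WLinear (M.subst k N)
  | var m, k, N, _, hN => by
      simp only [subst, substAll]
      by_cases h1 : m < k
      · simp [h1]; trivial
      · by_cases h2 : m = k
        · simpa [h1, h2] using hN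
        · simp [h1, h2]; trivial
  | app A B, k, N, hM, hN =>
      ⟨wlinear_subst A k N hM.1 hN, wlinear_subst B k N hM.2 hN⟩
  | lam A, k, N, hM, hN => by
      rw [subst_lam]
      refine ⟨wlinear_subst A (k+1) N.shift hM.1 ((wlinear_shift N).2 hN), ?_⟩
      rw [cf_subst, cf_shift_zero]
      simp [hM.2]

theorem size_pos : ∀ M : Lam, 0 < M.size
  | var _ => Nat.one_pos
  | app A B => by simp [size]
  | lam A => by simp [size]

theorem size_rename : ∀ (M : Lam) (ρ : ℕ → ℕ), (M.rename ρ).size = M.size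
  | var _, _ => rfl
  | app A B, ρ => by simp [rename, size, size_rename A, size_rename B]
  | lam A, ρ => by simp [rename, size, size_rename A]

theorem size_subst : ∀ (M : Lam) (k : ℕ) (N : Lam),
    (M.subst k N).size + M.countFree k = M.size + M.countFree k * N.size
  | var m, k, N => by
      simp only [subst, substAll, countFree, size]
      by_cases h1 : m < k
      · have : m ≠ k := by omega
        simp [h1, this, size]
      · by_cases h2 : m = k
        · simp only [h1, h2, if_false, ite_false, if_pos rfl, if_true, size, countFree]
          simp [h2]
          omega
        · simp [h1, h2, size]
  | app A B, k, N => by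
      have hA := size_subst A k N
      have hB := size_subst B k N
      simp only [subst, substAll, size, countFree] at hA hB ⊢
      nlinarith [hA, hB]
  | lam A, k, N => by
      rw [subst_lam]
      have hA := size_subst A (k+1) N.shift
      have hs : N.shift.size = N.size := by
        simp only [shift]; exact size_rename N _
      rw [hs] at hA
      simp only [size, countFree]
      omega

/-- β-reduction preserves weak linearity and free-variable counts, and
strictly decreases the size, on weakly linear terms. -/
theorem beta_preserve : ∀ {M M' : Lam}, Beta M M' → WLinear M →
    WLinear M' ∧ (∀ n, M'.countFree n = M.countFree n) ∧ M'.size < M.size := by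
  intro M M' h
  induction h with
  | beta A N =>
      intro hw
      obtain ⟨⟨hA, hA0⟩, hN⟩ := hw
      refine ⟨wlinear_subst A 0 N hA hN, ?_, ?_⟩
      · intro n
        rw [cf_subst]
        simp [hA0, countFree]
      · have := size_subst A 0 N
        rw [hA0] at this
        simp only [size, countFree]
        omega
  | appL N _ ih =>
      intro hw
      obtain ⟨h1, h2, h3⟩ := ih hw.1
      exact ⟨⟨h1, hw.2⟩, fun n => by simp [countFree, h2 n], by simp [size]; omega⟩
  | appR M _ ih =>
      intro hw
      obtain ⟨h1, h2, h3⟩ := ih hw.2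
      exact ⟨⟨hw.1, h1⟩, fun n => by simp [countFree, h2 n], by simp [size]; omega⟩
  | lam _ ih =>
      intro hw
      obtain ⟨h1, h2, h3⟩ := ih hw.1
      exact ⟨⟨h1, by rw [h2 0]; exact hw.2⟩,
        fun n => by simp [countFree, h2 (n+1)], by simp [size]; omega⟩

/-- η-reduction preserves weak linearity and free-variable counts. -/
theorem eta_preserve : ∀ {M M' : Lam}, Eta M M' → WLinear M →
    WLinear M' ∧ (∀ n, M'.countFree n = M.countFree n) := by
  intro M M' h
  induction h with
  | eta A =>
      intro hw
      refine ⟨(wlinear_shift A).1 hw.1.1, ?_⟩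
      intro n
      have h1 : (var 0 : Lam).countFree (n+1) = 0 := by simp [countFree]
      simp [countFree, cf_shift_succ, h1]
  | appL N _ ih =>
      intro hw
      obtain ⟨h1, h2⟩ := ih hw.1
      exact ⟨⟨h1, hw.2⟩, fun n => by simp [countFree, h2 n]⟩
  | appR M _ ih =>
      intro hw
      obtain ⟨h1, h2⟩ := ih hw.2
      exact ⟨⟨hw.1, h1⟩, fun n => by simp [countFree, h2 n]⟩
  | lam _ ih =>
      intro hw
      obtain ⟨h1, h2⟩ := ih hw.1
      exact ⟨⟨h1, by rw [h2 0]; exact hw.2⟩, fun n => by simp [countFree, h2 (n+1)]⟩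

theorem betaEta_preserve {M M' : Lam} (h : BetaEta M M') (hw : WLinear M) :
    WLinear M' ∧ (∀ n, M'.countFree n = M.countFree n) := by
  cases h with
  | inl h => exact ⟨(beta_preserve h hw).1, (beta_preserve h hw).2.1⟩
  | inr h => exact eta_preserve h hw

theorem rtg_preserve {M M' : Lam} (h : Relation.ReflTransGen BetaEta M M')
    (hw : WLinear M) : WLinear M' ∧ (∀ n, M'.countFree n = M.countFree n) := by
  induction h with
  | refl => exact ⟨hw, fun _ => rfl⟩
  | tail _ hstep ih =>
      obtain ⟨h1, h2⟩ := ih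
      obtain ⟨h3, h4⟩ := betaEta_preserve hstep h1
      exact ⟨h3, fun n => (h4 n).trans (h2 n)⟩
/-- Secondary measure: variable occurrences not inside a copy of `I`. -/
def mu : Lam → ℕ
  | var _ => 1
  | app A B => mu A + mu B
  | lam A => if A = var 0 then 0 else mu A

theorem mu_le_size : ∀ M : Lam, mu M ≤ M.size
  | var _ => le_refl 1
  | app A B => by
      have := mu_le_size A; have := mu_le_size B
      simp only [mu, size]; omega
  | lam A => by
      have := mu_le_size A
      simp only [mu, size]
      split <;> omega

theorem subst_I_ne_var0 : ∀ (A : Lam) (k : ℕ), A ≠ var 0 → A.subst (k+1) I ≠ var 0 := by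
  intro A k hA
  cases A with
  | var m =>
      simp only [subst, substAll]
      by_cases h1 : m < k + 1
      · have : m ≠ 0 := fun h => hA (by rw [h])
        simp [h1]
        omega
      · by_cases h2 : m = k + 1
        · simp [h1, h2, I]
        · have : m - 1 ≠ 0 := by omega
          simp [h1, h2, this]
  | app A B => rw [subst]; simp [substAll]
  | lam A => rw [subst_lam]; simp

theorem shift_I : (I : Lam).shift = I := rfl

theorem mu_subst_I : ∀ (M : Lam) (k : ℕ), mu (M.subst k I) + M.countFree k = mu M
  | var m, k => by
      simp only [subst, substAll, countFree]
      rcases lt_trichotomy m k with h | h | h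
      · have : m ≠ k := by omega
        simp [h, this, mu]
      · subst h
        simp [lt_irrefl, mu, I]
      · have h1 : ¬ m < k := by omega
        have h2 : m ≠ k := by omega
        simp [h1, h2, mu]
  | app A B, k => by
      have hA := mu_subst_I A k
      have hB := mu_subst_I B k
      simp only [subst, substAll, mu, countFree] at hA hB ⊢
      omega
  | lam A, k => by
      rw [subst_lam, shift_I]
      simp only [mu, countFree]
      by_cases hA : A = var 0
      · subst hA
        have : (var 0 : Lam).subst (k+1) I = var 0 := by
          simp [subst, substAll]
        rw [this]
        simp [countFree]
      · have h1 := mu_subst_I A (k+1)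
        rw [if_neg (subst_I_ne_var0 A k hA), if_neg hA]
        exact h1

/-- Closed β-normal terms are abstractions. -/
theorem closed_normal_lam : ∀ M : Lam, M.Closed → (∀ M', ¬ Beta M M') →
    ∃ B, M = lam B
  | var n, hc, _ => by
      have := hc n
      simp [countFree] at this
  | app A B, hc, hn => by
      exfalso
      have hcA : A.Closed := by
        intro n
        have := hc n
        simp only [countFree] at this
        omega
      have hnA : ∀ A', ¬ Beta A A' := fun A' h => hn (app A' B) (Beta.appL B h)
      obtain ⟨C, hC⟩ := closed_normal_lam A hcA hnA
      exact hn _ (hC ▸ Beta.beta C B)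
  | lam A, _, _ => ⟨A, rfl⟩

/-- `iterApp M n = M I I ... I` (`n` copies of `I`). -/
def iterApp (M : Lam) : ℕ → Lam
  | 0 => M
  | n+1 => app (iterApp M n) I

theorem iterApp_cons (M : Lam) : ∀ n, iterApp M (n+1) = iterApp (app M I) n
  | 0 => rfl
  | n+1 => by rw [iterApp, iterApp_cons M n]; rfl

theorem iterApp_add (M : Lam) (n : ℕ) : ∀ k, iterApp M (n + k) = iterApp (iterApp M n) k
  | 0 => rfl
  | k+1 => by rw [← Nat.add_assoc, iterApp, iterApp_add M n k]; rfl

theorem beta_iterApp {M M' : Lam} (h : Beta M M') :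
    ∀ n, Beta (iterApp M n) (iterApp M' n)
  | 0 => h
  | n+1 => Beta.appL I (beta_iterApp h n)

theorem eta_iterApp {M M' : Lam} (h : Eta M M') :
    ∀ n, Eta (iterApp M n) (iterApp M' n)
  | 0 => h
  | n+1 => Eta.appL I (eta_iterApp h n)

theorem rtg_iterApp {M M' : Lam} (h : Relation.ReflTransGen BetaEta M M') (n : ℕ) :
    Relation.ReflTransGen BetaEta (iterApp M n) (iterApp M' n) := by
  induction h with
  | refl => exact Relation.ReflTransGen.refl
  | tail _ hstep ih =>
      refine ih.tail ?_
      cases hstep with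
      | inl h => exact Or.inl (beta_iterApp h n)
      | inr h => exact Or.inr (eta_iterApp h n)

theorem subst0_var0 (N : Lam) : (var 0).subst 0 N = N := by
  simp [subst, substAll]

theorem subst0_I (N : Lam) : (I : Lam).subst 0 N = I := rfl

theorem iterApp_I : ∀ k, Relation.ReflTransGen BetaEta (iterApp I k) I
  | 0 => Relation.ReflTransGen.refl
  | k+1 => by
      rw [iterApp_cons]
      refine Relation.ReflTransGen.head (Or.inl (beta_iterApp (Beta.beta (var 0) I) k)) ?_
      rw [subst0_var0]
      exact iterApp_I k

theorem iterApp_mono {M : Lam} {n m : ℕ} (hnm : n ≤ m)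
    (h : Relation.ReflTransGen BetaEta (iterApp M n) I) :
    Relation.ReflTransGen BetaEta (iterApp M m) I := by
  obtain ⟨k, rfl⟩ := Nat.exists_eq_add_of_le hnm
  rw [iterApp_add]
  exact (rtg_iterApp h k).trans (iterApp_I k)
theorem cf_I (n : ℕ) : (I : Lam).countFree n = 0 := by
  simp [I, countFree]

theorem wlinear_I : WLinear I := ⟨trivial, by simp [countFree]⟩

/-- **Key lemma**: every closed weakly linear term, applied to enough copies
of `I`, βη-reduces to `I`. -/
theorem erase_closed : ∀ (k : ℕ) (M : Lam), M.size * M.size + mu M ≤ k →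
    WLinear M → M.Closed → ∃ n, Relation.ReflTransGen BetaEta (iterApp M n) I := by
  intro k
  induction k with
  | zero =>
      intro M hk
      have := size_pos M
      exfalso; nlinarith
  | succ k ih =>
      intro M hk hw hc
      by_cases hred : ∃ M', Beta M M'
      · obtain ⟨M', hM'⟩ := hred
        obtain ⟨h1, h2, h3⟩ := beta_preserve hM' hw
        have hc' : M'.Closed := fun n => (h2 n).trans (hc n)
        have hmeas : M'.size * M'.size + mu M' ≤ k := by
          have := mu_le_size M'
          nlinarith
        obtain ⟨n, hn⟩ := ih M' hmeas h1 hc'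
        exact ⟨n, Relation.ReflTransGen.head (Or.inl (beta_iterApp hM' n)) hn⟩
      · push_neg at hred
        obtain ⟨B, rfl⟩ := closed_normal_lam M hc hred
        by_cases hB : B = var 0
        · subst hB
          exact ⟨0, Relation.ReflTransGen.refl⟩
        · have hwB := hw.1
          have hB0 : B.countFree 0 = 1 := hw.2
          have hwW : WLinear (B.subst 0 I) := wlinear_subst B 0 I hwB wlinear_I
          have hcW : (B.subst 0 I).Closed := by
            intro n
            rw [cf_subst, cf_I, hB0]
            have := hc n
            simp only [countFree] at this
            simpa using this
          have hsW : (B.subst 0 I).size = B.size + 1 := by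
            have h1 := size_subst B 0 I
            rw [hB0] at h1
            have hI2 : (I : Lam).size = 2 := rfl
            rw [hI2] at h1
            omega
          have hmuW : mu (B.subst 0 I) + 1 = mu B := by
            have h1 := mu_subst_I B 0
            rw [hB0] at h1
            exact h1
          have hk' : (B.size + 1) * (B.size + 1) + mu B ≤ k + 1 := by
            have hmB : mu (lam B) = mu B := by simp [mu, hB]
            simpa [size, hmB] using hk
          have hmeas : (B.subst 0 I).size * (B.subst 0 I).size
              + mu (B.subst 0 I) ≤ k := by
            rw [hsW]; omega
          obtain ⟨n, hn⟩ := ih (B.subst 0 I) hmeas hwW hcW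
          refine ⟨n + 1, ?_⟩
          rw [iterApp_cons]
          exact Relation.ReflTransGen.head
            (Or.inl (beta_iterApp (Beta.beta B I) n)) hn

theorem cf_iterApp_var0 : ∀ (N : ℕ) (n : ℕ),
    (iterApp (var 0) N).countFree n = if n = 0 then 1 else 0
  | 0, n => by simp [iterApp, countFree, eq_comm]
  | N+1, n => by
      simp [iterApp, countFree, cf_iterApp_var0 N n, cf_I]

theorem linear_iterApp_var0 : ∀ N : ℕ, Linear (iterApp (var 0) N)
  | 0 => trivial
  | N+1 => ⟨linear_iterApp_var0 N, ⟨trivial, by simp [countFree]⟩,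
      fun n => Or.inr (cf_I n)⟩

theorem subst_iterApp (M : Lam) : ∀ N : ℕ,
    (iterApp (var 0) N).subst 0 M = iterApp M N
  | 0 => subst0_var0 M
  | N+1 => by
      have h0 : (iterApp (var 0) (N+1)).subst 0 M
          = app ((iterApp (var 0) N).subst 0 M) ((I : Lam).subst 0 M) := rfl
      rw [h0, subst_iterApp M N, subst0_I]
      rfl

end Lam

theorem erasable_closed_aux (X : Set Lam) (hfin : X.Finite)
    (hlin : ∀ M ∈ X, Lam.Linear M) :
    Erasable X ↔ ∀ M ∈ X, Lam.Closed M := by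
  constructor
  · rintro ⟨E, hE, hred⟩ M hM n
    have hw : Lam.WLinear (Lam.app E M) :=
      ⟨Lam.linear_wlinear E hE, Lam.linear_wlinear M (hlin M hM)⟩
    obtain ⟨_, hcf⟩ := Lam.rtg_preserve (hred M hM) hw
    have h2 : E.countFree n + M.countFree n = 0 := by
      have h1 := hcf n
      rw [Lam.cf_I] at h1
      exact h1.symm
    omega
  · intro hcl
    have hex : ∀ M : Lam, ∃ n, M ∈ X →
        Relation.ReflTransGen Lam.BetaEta (Lam.iterApp M n) Lam.I := by
      intro M
      by_cases hM : M ∈ X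
      · obtain ⟨n, hn⟩ := Lam.erase_closed (M.size * M.size + Lam.mu M) M le_rfl
          (Lam.linear_wlinear M (hlin M hM)) (hcl M hM)
        exact ⟨n, fun _ => hn⟩
      · exact ⟨0, fun h => absurd h hM⟩
    choose nf hnf using hex
    set N := hfin.toFinset.sup nf with hN
    refine ⟨Lam.lam (Lam.iterApp (Lam.var 0) N),
      ⟨Lam.linear_iterApp_var0 N, by simpa using Lam.cf_iterApp_var0 N 0⟩, ?_⟩
    intro M hM
    refine Relation.ReflTransGen.head (Or.inl (Lam.Beta.beta _ M)) ?_
    rw [Lam.subst_iterApp]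
    exact Lam.iterApp_mono (Finset.le_sup (hfin.mem_toFinset.2 hM)) (hnf M hM)

/-- Proposition 2.1: a finite set of linear λ-terms is erasable
if and only if all of its elements are closed. -/
theorem erasable_iff_all_closed
    (X : Set Lam) (hfin : X.Finite) (hlin : ∀ M ∈ X, Lam.Linear M) :
    Erasable X ↔ ∀ M ∈ X, Lam.Closed M :=
  erasable_closed_aux X hfin hlin

end LEMPaper
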